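/- arXiv:1701.01967 — 3 statements merged into one kernel-verified Lean document; each statement's English description precedes it below -/
import Mathlib

section
/- Let X be a topological space and let Cap be an outer measure on X (so Cap(∅) = 0, Cap is monotone and countably subadditive). Let f : X → ℝ be Cap-quasi-continuous, meaning: for every ε > 0 there exists a closed set F ⊆ X with Cap(F) < ε such that the restriction of f to X \ F is continuous. Let O ⊆ X be an open set, and suppose there exists a closed set Z ⊆ X with Cap(Z) = 0 such that f(x) = 0 for every x ∈ O \ Z. Then Cap({x ∈ closure(O) : f(x) ≠ 0}) = 0. -/
open MeasureTheory ENNReal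

/-- Lemma 2.5 in abstract outer-measure form: if `f` is `Cap`-quasi-continuous and
vanishes on an open set `O` outside a closed set of capacity zero, then the set of
points of `closure O` where `f` does not vanish has capacity zero. -/
theorem quasicontinuous_zero_on_closure {X : Type*} [TopologicalSpace X]
    (Cap : MeasureTheory.OuterMeasure X) (f : X → ℝ)
    (hqc : ∀ ε : ℝ≥0∞, 0 < ε → ∃ F : Set X, IsClosed F ∧ Cap F < ε ∧ ContinuousOn f Fᶜ)
    (O : Set X) (hO : IsOpen O)
    (hZ : ∃ Z : Set X, IsClosed Z ∧ Cap Z = 0 ∧ ∀ x ∈ O \ Z, f x = 0) :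
    Cap {x ∈ closure O | f x ≠ 0} = 0 := by
  obtain ⟨Z, hZc, hZ0, hZf⟩ := hZ
  -- It suffices to show the capacity is below every positive ε.
  refine le_antisymm ?_ zero_le'
  refine le_of_forall_gt fun ε hε => ?_
  obtain ⟨F, hFc, hFε, hFcont⟩ := hqc ε hε
  -- The bad set is contained in Z ∪ F.
  have hsub : {x ∈ closure O | f x ≠ 0} ⊆ Z ∪ F := by
    intro x hx
    by_contra hxZF
    simp only [Set.mem_union, not_or] at hxZF
    obtain ⟨hxcl, hxne⟩ := hx
    apply hxne
    -- U is an open neighborhood of x avoiding Z and F.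
    set U : Set X := (Z ∪ F)ᶜ with hU
    have hUopen : IsOpen U := (hZc.union hFc).isOpen_compl
    have hxU : x ∈ U := by
      simp only [hU, Set.mem_compl_iff, Set.mem_union]
      tauto
    -- x is in the closure of O ∩ U.
    have hxclOU : x ∈ closure (O ∩ U) := by
      rw [mem_closure_iff] at hxcl ⊢
      intro V hV hxV
      obtain ⟨y, hy⟩ := hxcl (V ∩ U) (hV.inter hUopen) ⟨hxV, hxU⟩
      exact ⟨y, ⟨hy.1.1, ⟨hy.2, hy.1.2⟩⟩⟩
    -- f vanishes on O ∩ U.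
    have hf0 : ∀ y ∈ O ∩ U, f y = 0 := by
      intro y hy
      refine hZf y ⟨hy.1, ?_⟩
      have := hy.2
      simp only [hU, Set.mem_compl_iff, Set.mem_union] at this
      tauto
    -- f is continuous at x since x ∈ Fᶜ which is open.
    have hxF : x ∈ Fᶜ := by
      have : x ∈ U := hxU
      simp only [hU, Set.mem_compl_iff, Set.mem_union] at this
      exact fun h => this (Or.inr h)
    have hcx : ContinuousAt f x :=
      hFcont.continuousAt (hFc.isOpen_compl.mem_nhds hxF)
    -- Tendsto arguments within O ∩ U.
    have hne : (nhdsWithin x (O ∩ U)).NeBot :=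
      mem_closure_iff_nhdsWithin_neBot.mp hxclOU
    have h1 : Filter.Tendsto f (nhdsWithin x (O ∩ U)) (nhds (f x)) :=
      hcx.continuousWithinAt
    have h2 : Filter.Tendsto f (nhdsWithin x (O ∩ U)) (nhds 0) := by
      refine Filter.Tendsto.congr' ?_ tendsto_const_nhds
      filter_upwards [self_mem_nhdsWithin] with y hy
      exact (hf0 y hy).symm
    exact tendsto_nhds_unique h1 h2
  calc Cap {x ∈ closure O | f x ≠ 0} ≤ Cap (Z ∪ F) := Cap.mono hsub
    _ ≤ Cap Z + Cap F := measure_union_le Z F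
    _ = Cap F := by rw [hZ0, zero_add]
    _ < ε := hFε
end

section
/- Let X be a measurable space, let g : X → [0, ∞] be a measurable function, and let (ν_j)_{j ∈ ℕ} and ν_∞ be measures on X. Suppose that for every s ∈ (0, ∞), ν_j({x ∈ X : g(x) > s}) converges to ν_∞({x ∈ X : g(x) > s}) as j → ∞ (convergence in [0, ∞]). Then liminf_{j→∞} ∫ g dν_j ≥ ∫ g dν_∞, where the integrals are Lebesgue integrals of a nonnegative function (possibly equal to +∞). -/
open MeasureTheory Filter ENNReal Set

/-- Pointwise: `⨆ n, min (g x) n = g x`. -/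
lemma iSup_min_nat_eq (a : ℝ≥0∞) : ⨆ n : ℕ, min a (n : ℝ≥0∞) = a := by
  apply le_antisymm (iSup_le fun n => min_le_left _ _)
  rcases eq_or_ne a ⊤ with ha | ha
  · subst ha
    calc (⊤ : ℝ≥0∞) = ⨆ n : ℕ, (n : ℝ≥0∞) := (iSup_natCast).symm
    _ ≤ ⨆ n : ℕ, min ⊤ (n : ℝ≥0∞) := by simp
  · obtain ⟨n, hn⟩ := ENNReal.exists_nat_gt ha
    calc a = min a n := (min_eq_left hn.le).symm
    _ ≤ ⨆ n : ℕ, min a (n : ℝ≥0∞) := le_iSup (fun n : ℕ => min a (n : ℝ≥0∞)) n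

/-- Layer-cake formula for an `ℝ≥0∞`-valued measurable function and an arbitrary measure. -/
lemma lintegral_eq_lintegral_meas_lt_ennreal {X : Type*} [MeasurableSpace X]
    (μ : Measure X) {g : X → ℝ≥0∞} (hg : Measurable g) :
    ∫⁻ x, g x ∂μ = ∫⁻ t in Ioi (0 : ℝ), μ {x | ENNReal.ofReal t < g x} := by
  -- truncations
  have mono_min : ∀ x, Monotone fun n : ℕ => min (g x) (n : ℝ≥0∞) := fun x m n hmn =>
    min_le_min le_rfl (by exact_mod_cast Nat.cast_le.mpr hmn)
  have meas_min : ∀ n : ℕ, Measurable fun x => min (g x) (n : ℝ≥0∞) := fun n =>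
    hg.min measurable_const
  -- bounded layer cake, from the real-valued version
  have bounded : ∀ n : ℕ, ∫⁻ x, min (g x) (n : ℝ≥0∞) ∂μ
      = ∫⁻ t in Ioi (0 : ℝ), μ {x | ENNReal.ofReal t < min (g x) (n : ℝ≥0∞)} := by
    intro n
    have hne : ∀ x, min (g x) (n : ℝ≥0∞) ≠ ⊤ := fun x =>
      ne_top_of_le_ne_top (natCast_ne_top n) (min_le_right _ _)
    have key := lintegral_eq_lintegral_meas_lt μ
      (f := fun x => (min (g x) (n : ℝ≥0∞)).toReal)
      (Eventually.of_forall fun x => ENNReal.toReal_nonneg)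
      ((meas_min n).ennreal_toReal).aemeasurable
    have lhs : ∫⁻ x, ENNReal.ofReal ((min (g x) (n : ℝ≥0∞)).toReal) ∂μ
        = ∫⁻ x, min (g x) (n : ℝ≥0∞) ∂μ :=
      lintegral_congr fun x => ENNReal.ofReal_toReal (hne x)
    rw [lhs] at key
    rw [key]
    apply setLIntegral_congr_fun measurableSet_Ioi
    intro t ht
    dsimp only
    congr 1
    ext x
    simp only [Set.mem_setOf_eq]
    exact (ENNReal.ofReal_lt_iff_lt_toReal (le_of_lt ht) (hne x)).symm
  -- limits on both sides
  have lim_lhs : ∫⁻ x, g x ∂μ = ⨆ n : ℕ, ∫⁻ x, min (g x) (n : ℝ≥0∞) ∂μ := by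
    rw [← lintegral_iSup meas_min fun m n hmn x => mono_min x hmn]
    exact lintegral_congr fun x => (iSup_min_nat_eq (g x)).symm
  have set_union : ∀ t : ℝ, {x | ENNReal.ofReal t < g x}
      = ⋃ n : ℕ, {x | ENNReal.ofReal t < min (g x) (n : ℝ≥0∞)} := by
    intro t
    ext x
    simp only [Set.mem_setOf_eq, Set.mem_iUnion]
    constructor
    · intro hx
      obtain ⟨n, hn⟩ := ENNReal.exists_nat_gt (ENNReal.ofReal_ne_top : ENNReal.ofReal t ≠ ⊤)
      exact ⟨n, lt_min hx hn⟩
    · rintro ⟨n, hn⟩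
      exact hn.trans_le (min_le_left _ _)
  have meas_eq : ∀ t : ℝ, μ {x | ENNReal.ofReal t < g x}
      = ⨆ n : ℕ, μ {x | ENNReal.ofReal t < min (g x) (n : ℝ≥0∞)} := by
    intro t
    rw [set_union t]
    have hmono : Monotone fun n : ℕ => {x | ENNReal.ofReal t < min (g x) (n : ℝ≥0∞)} :=
      fun m n hmn x hx => lt_of_lt_of_le hx (mono_min x hmn)
    exact hmono.directed_le.measure_iUnion
  have lim_rhs : ∫⁻ t in Ioi (0 : ℝ), μ {x | ENNReal.ofReal t < g x}
      = ⨆ n : ℕ, ∫⁻ t in Ioi (0 : ℝ), μ {x | ENNReal.ofReal t < min (g x) (n : ℝ≥0∞)} := by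
    have hanti : ∀ n : ℕ, Antitone fun t : ℝ => μ {x | ENNReal.ofReal t < min (g x) (n : ℝ≥0∞)} :=
      fun n s t hst => measure_mono fun x hx => lt_of_le_of_lt (ofReal_le_ofReal hst) hx
    rw [← lintegral_iSup' (fun n => (hanti n).measurable.aemeasurable)
      (Eventually.of_forall fun t m n hmn =>
        measure_mono fun x hx => lt_of_lt_of_le hx (mono_min x hmn))]
    exact lintegral_congr fun t => meas_eq t
  rw [lim_lhs, lim_rhs]
  exact iSup_congr bounded

/-- Lemma A.3: a variant of Fatou's lemma for a sequence of measures whose values on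
all superlevel sets of `g` converge. -/
theorem lintegral_le_liminf_of_tendsto_measure_superlevel {X : Type*} [MeasurableSpace X]
    (g : X → ℝ≥0∞) (hg : Measurable g)
    (ν : ℕ → Measure X) (νinf : Measure X)
    (h : ∀ s : ℝ≥0∞, 0 < s → s < ⊤ →
      Tendsto (fun j => ν j {x | s < g x}) atTop (nhds (νinf {x | s < g x}))) :
    ∫⁻ x, g x ∂νinf ≤ atTop.liminf (fun j => ∫⁻ x, g x ∂(ν j)) := by
  rw [lintegral_eq_lintegral_meas_lt_ennreal νinf hg]
  calc ∫⁻ t in Ioi (0 : ℝ), νinf {x | ENNReal.ofReal t < g x}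
      = ∫⁻ t in Ioi (0 : ℝ), atTop.liminf fun j => ν j {x | ENNReal.ofReal t < g x} := by
        apply setLIntegral_congr_fun measurableSet_Ioi
        intro t ht
        exact ((h (ENNReal.ofReal t) (ofReal_pos.mpr ht) ofReal_lt_top).liminf_eq).symm
    _ ≤ atTop.liminf fun j => ∫⁻ t in Ioi (0 : ℝ), ν j {x | ENNReal.ofReal t < g x} := by
        apply lintegral_liminf_le'
        intro j
        have hanti : Antitone fun t : ℝ => ν j {x | ENNReal.ofReal t < g x} :=
          fun s t hst => measure_mono fun x hx => lt_of_le_of_lt (ofReal_le_ofReal hst) hx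
        exact hanti.measurable.aemeasurable
    _ = atTop.liminf fun j => ∫⁻ x, g x ∂(ν j) :=
        congrArg (fun f : ℕ → ℝ≥0∞ => atTop.liminf f)
          (funext fun j => (lintegral_eq_lintegral_meas_lt_ennreal (ν j) hg).symm)
end

section
/- Let (X, d) be a metric space, μ a Borel measure on X, p ∈ X and k > 0 a real number. Suppose the k-dimensional density limit exists and is finite and positive: lim_{r→0+} μ(B_r(p))/r^k = c for some c ∈ (0, ∞). Define b(p,r) := ∫_{B_r(p)} (1 − d(p,x)/r) dμ(x). Then lim_{r→0+} b(p,r)/r^k = c/(k+1). -/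
open MeasureTheory Metric Filter ENNReal

private lemma layercake_ball {X : Type*} [MetricSpace X] [MeasurableSpace X]
    [BorelSpace X] (μ : Measure X) (p : X) {r : ℝ} (hr : 0 < r) :
    (∫⁻ x in ball p r, ENNReal.ofReal (1 - dist p x / r) ∂μ)
      = ∫⁻ t in Set.Ioo (0:ℝ) 1, μ (ball p (r * (1 - t))) := by
  have hmble : AEMeasurable (fun x => 1 - dist p x / r) (μ.restrict (ball p r)) :=
    (measurable_const.sub ((continuous_const.dist continuous_id).measurable.div_const r)).aemeasurable
  have f_nn : 0 ≤ᵐ[μ.restrict (ball p r)] fun x => 1 - dist p x / r := by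
    refine ae_restrict_of_forall_mem measurableSet_ball fun x hx => ?_
    have hx' : dist p x / r < 1 := (div_lt_one hr).mpr (by rw [dist_comm]; exact hx)
    simp only [Pi.zero_apply]
    linarith
  rw [lintegral_eq_lintegral_meas_lt _ f_nn hmble]
  have key : ∀ t ∈ Set.Ioi (0:ℝ), (μ.restrict (ball p r)) {a | t < 1 - dist p a / r}
      = Set.indicator (Set.Ioo (0:ℝ) 1) (fun t => μ (ball p (r * (1 - t)))) t := by
    intro t ht
    by_cases h1 : t < 1
    · rw [Set.indicator_of_mem (Set.mem_Ioo.mpr ⟨Set.mem_Ioi.mp ht, h1⟩) _]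
      have hset : {a | t < 1 - dist p a / r} = ball p (r * (1 - t)) := by
        ext a
        simp only [Set.mem_setOf_eq, mem_ball]
        rw [dist_comm, show r * (1 - t) = (1 - t) * r from mul_comm _ _, ← div_lt_iff₀ hr]
        constructor <;> intro <;> linarith
      rw [hset, Measure.restrict_apply measurableSet_ball,
        Set.inter_eq_left.mpr (ball_subset_ball (by nlinarith [Set.mem_Ioi.mp ht]))]
    · rw [Set.indicator_of_notMem (fun hm => h1 hm.2)]
      have hset : {a | t < 1 - dist p a / r} = (∅ : Set X) := by
        ext a
        simp only [Set.mem_setOf_eq, Set.mem_empty_iff_false, iff_false, not_lt]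
        have : 0 ≤ dist p a / r := div_nonneg dist_nonneg hr.le
        linarith
      rw [hset]
      simp
  rw [setLIntegral_congr_fun measurableSet_Ioi key,
    lintegral_indicator measurableSet_Ioo _, Measure.restrict_restrict measurableSet_Ioo,
    Set.inter_eq_left.mpr Set.Ioo_subset_Ioi_self]

/-- Lemma 4.3: if the `k`-dimensional density `lim_{r→0} μ(B_r(p))/r^k = c ∈ (0,∞)`
exists, then `b(p,r) := ∫_{B_r(p)} (1 − d(p,x)/r) dμ` satisfies
`lim_{r→0} b(p,r)/r^k = c/(k+1)`. -/
theorem tendsto_b_div_rpow {X : Type*} [MetricSpace X] [MeasurableSpace X]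
    [BorelSpace X] (μ : Measure X) (p : X) (k : ℝ) (hk : 0 < k)
    (c : ℝ≥0∞) (hc0 : 0 < c) (hctop : c < ⊤)
    (hdens : Tendsto (fun r : ℝ => μ (ball p r) / ENNReal.ofReal (r ^ k))
      (nhdsWithin 0 (Set.Ioi 0)) (nhds c)) :
    Tendsto (fun r : ℝ =>
        (∫⁻ x in ball p r, ENNReal.ofReal (1 - dist p x / r) ∂μ) / ENNReal.ofReal (r ^ k))
      (nhdsWithin 0 (Set.Ioi 0)) (nhds (c / ENNReal.ofReal (k + 1))) := by
  set G : ℝ → ℝ≥0∞ := fun ρ => μ (ball p ρ) / ENNReal.ofReal (ρ ^ k) with hG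
  set F : ℝ → ℝ → ℝ≥0∞ := fun r t => μ (ball p (r * (1 - t))) / ENNReal.ofReal (r ^ k) with hF
  -- pointwise identity
  have hpt : ∀ t ∈ Set.Ioo (0:ℝ) 1, ∀ r ∈ Set.Ioi (0:ℝ),
      F r t = G (r * (1 - t)) * ENNReal.ofReal ((1 - t) ^ k) := by
    intro t ht r hr
    have hr' : (0:ℝ) < r := hr
    have h1t : (0:ℝ) < 1 - t := by linarith [ht.2]
    have hX : ENNReal.ofReal (r ^ k) ≠ 0 := by
      simp only [ne_eq, ENNReal.ofReal_eq_zero, not_le]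
      exact Real.rpow_pos_of_pos hr' k
    have hXt : ENNReal.ofReal (r ^ k) ≠ ⊤ := ofReal_ne_top
    have hY0 : ENNReal.ofReal ((1 - t) ^ k) ≠ 0 := by
      simp only [ne_eq, ENNReal.ofReal_eq_zero, not_le]
      exact Real.rpow_pos_of_pos h1t k
    have hYt : ENNReal.ofReal ((1 - t) ^ k) ≠ ⊤ := ofReal_ne_top
    have hsplit : ENNReal.ofReal ((r * (1 - t)) ^ k)
        = ENNReal.ofReal (r ^ k) * ENNReal.ofReal ((1 - t) ^ k) := by
      rw [Real.mul_rpow hr'.le h1t.le, ENNReal.ofReal_mul (Real.rpow_nonneg hr'.le k)]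
    simp only [hG, hF]
    rw [hsplit, div_eq_mul_inv, div_eq_mul_inv,
      ENNReal.mul_inv (Or.inl hX) (Or.inl hXt), ← mul_assoc,
      mul_assoc _ _ (ENNReal.ofReal ((1 - t) ^ k)),
      ENNReal.inv_mul_cancel hY0 hYt, mul_one]
  -- eventual equality with the parametric integral
  have heq : ∀ᶠ r in nhdsWithin (0:ℝ) (Set.Ioi 0),
      (∫⁻ x in ball p r, ENNReal.ofReal (1 - dist p x / r) ∂μ) / ENNReal.ofReal (r ^ k)
        = ∫⁻ t in Set.Ioo (0:ℝ) 1, F r t := by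
    filter_upwards [self_mem_nhdsWithin] with r hr
    have hXt : (ENNReal.ofReal (r ^ k))⁻¹ ≠ ⊤ := by
      rw [ne_eq, ENNReal.inv_eq_top, ENNReal.ofReal_eq_zero, not_le]
      exact Real.rpow_pos_of_pos hr k
    rw [layercake_ball μ p hr, div_eq_mul_inv,
      ← lintegral_mul_const' _ _ hXt]
    simp only [hF, div_eq_mul_inv]
  -- measurability
  have hF_meas : ∀ᶠ r in nhdsWithin (0:ℝ) (Set.Ioi 0), Measurable (F r) := by
    filter_upwards [self_mem_nhdsWithin] with r hr
    have hanti : Antitone fun t : ℝ => μ (ball p (r * (1 - t))) := fun t₁ t₂ h12 =>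
      measure_mono (ball_subset_ball (by nlinarith [Set.mem_Ioi.mp hr]))
    exact hanti.measurable.div_const _
  -- uniform bound
  have hevlt : ∀ᶠ ρ in nhdsWithin (0:ℝ) (Set.Ioi 0), G ρ < c + 1 :=
    hdens.eventually_lt_const (ENNReal.lt_add_right hctop.ne one_ne_zero)
  obtain ⟨ε, hε, hsub⟩ := mem_nhdsGT_iff_exists_Ioo_subset.mp hevlt
  have hbound : ∀ᶠ r in nhdsWithin (0:ℝ) (Set.Ioi 0),
      ∀ᵐ t ∂(volume.restrict (Set.Ioo (0:ℝ) 1)), F r t ≤ c + 1 := by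
    filter_upwards [Ioo_mem_nhdsGT_of_mem ⟨le_refl (0:ℝ), hε⟩] with r hr
    rw [ae_restrict_iff' measurableSet_Ioo]
    refine ae_of_all _ fun t ht => ?_
    have h1t : (0:ℝ) < 1 - t := by linarith [ht.2]
    have hmem : r * (1 - t) ∈ Set.Ioo (0:ℝ) ε := by
      constructor
      · exact mul_pos hr.1 h1t
      · nlinarith [hr.1, hr.2, ht.1]
    calc F r t = G (r * (1 - t)) * ENNReal.ofReal ((1 - t) ^ k) :=
          hpt t ht r hr.1
      _ ≤ (c + 1) * 1 := by
          refine mul_le_mul' (hsub hmem).le ?_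
          rw [← ENNReal.ofReal_one]
          exact ENNReal.ofReal_le_ofReal
            (Real.rpow_le_one h1t.le (by linarith [ht.1]) hk.le)
      _ = c + 1 := mul_one _
  have h_fin : (∫⁻ _ in Set.Ioo (0:ℝ) 1, (c + 1) ∂volume) ≠ ⊤ := by
    rw [setLIntegral_const, Real.volume_Ioo]
    simp only [sub_zero, ENNReal.ofReal_one, mul_one]
    exact ENNReal.add_ne_top.mpr ⟨hctop.ne, ENNReal.one_ne_top⟩
  -- pointwise limit
  have h_lim : ∀ᵐ t ∂(volume.restrict (Set.Ioo (0:ℝ) 1)),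
      Tendsto (fun r => F r t) (nhdsWithin (0:ℝ) (Set.Ioi 0))
        (nhds (c * ENNReal.ofReal ((1 - t) ^ k))) := by
    rw [ae_restrict_iff' measurableSet_Ioo]
    refine ae_of_all _ fun t ht => ?_
    have h1t : (0:ℝ) < 1 - t := by linarith [ht.2]
    have hcomp : Tendsto (fun r : ℝ => r * (1 - t)) (nhdsWithin (0:ℝ) (Set.Ioi 0))
        (nhdsWithin (0:ℝ) (Set.Ioi 0)) := by
      rw [tendsto_nhdsWithin_iff]
      constructor
      · have : Tendsto (fun r : ℝ => r * (1 - t)) (nhds 0) (nhds (0 * (1 - t))) :=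
          (continuous_mul_right (1 - t)).tendsto 0
        simpa using this.mono_left nhdsWithin_le_nhds
      · filter_upwards [self_mem_nhdsWithin] with r hr
        exact mul_pos hr h1t
    have := ENNReal.Tendsto.mul_const (hdens.comp hcomp) (Or.inr (ofReal_ne_top (r := (1 - t) ^ k)))
    refine this.congr' ?_
    filter_upwards [self_mem_nhdsWithin] with r hr
    exact (hpt t ht r hr).symm
  have hmain := tendsto_lintegral_filter_of_dominated_convergence
    (μ := volume.restrict (Set.Ioo (0:ℝ) 1)) (fun _ => c + 1) hF_meas hbound h_fin h_lim
  -- identify the limit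
  have hL : (∫⁻ t in Set.Ioo (0:ℝ) 1, c * ENNReal.ofReal ((1 - t) ^ k) ∂volume)
      = c / ENNReal.ofReal (k + 1) := by
    rw [lintegral_const_mul' _ _ hctop.ne]
    have hint : IntegrableOn (fun t : ℝ => (1 - t) ^ k) (Set.Ioo 0 1) := by
      have h0 : IntervalIntegrable (fun x : ℝ => x ^ k) volume 0 1 :=
        intervalIntegral.intervalIntegrable_rpow (Or.inl hk.le)
      have h1 : IntervalIntegrable (fun t : ℝ => (1 - t) ^ k) volume 0 1 := by
        simpa using (h0.comp_sub_left 1).symm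
      exact ((intervalIntegrable_iff_integrableOn_Ioc_of_le zero_le_one).mp h1).mono_set
        Set.Ioo_subset_Ioc_self
    have hnn : 0 ≤ᵐ[volume.restrict (Set.Ioo (0:ℝ) 1)] fun t => (1 - t) ^ k := by
      refine ae_restrict_of_forall_mem measurableSet_Ioo fun t ht => ?_
      simpa using Real.rpow_nonneg (by linarith [ht.2] : (0:ℝ) ≤ 1 - t) k
    rw [← ofReal_integral_eq_lintegral_ofReal hint hnn]
    have hval : (∫ t in Set.Ioo (0:ℝ) 1, (1 - t) ^ k) = 1 / (k + 1) := by
      rw [← integral_Ioc_eq_integral_Ioo, ← intervalIntegral.integral_of_le zero_le_one,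
        intervalIntegral.integral_comp_sub_left (fun x : ℝ => x ^ k) 1]
      norm_num
      rw [integral_rpow (Or.inl (by linarith))]
      rw [Real.one_rpow, Real.zero_rpow (by linarith : k + 1 ≠ 0)]
      ring
    rw [hval, ENNReal.ofReal_div_of_pos (by linarith : (0:ℝ) < k + 1)]
    simp [ENNReal.ofReal_one, div_eq_mul_inv]
  rw [hL] at hmain
  exact hmain.congr' (heq.mono fun r hr => hr.symm)
end
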